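/- Let U ⊆ ℝ^{n-1} be open, and let X : U → ℝⁿ \ {0} and N : U → ℝⁿ be continuously differentiable maps such that ‖N(u)‖ = 1 and ⟨N(u), ∂_α X(u)⟩ = 0 for all u ∈ U and all α = 1,…,n-1. Define N* = X/‖X‖. Then at every u ∈ U, det(N*, ∂₁N*, …, ∂_{n-1}N*) = ‖X‖^{-n} ⟨X,N⟩ det(N, ∂₁X, …, ∂_{n-1}X), where det(v₀, v₁, …, v_{n-1}) denotes the determinant of the n×n matrix with columns v₀, …, v_{n-1}. -/

import Mathlib

open Set RealInnerProductSpace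

noncomputable section

/-- The determinant of the `n × n` matrix whose columns are `v 0, …, v (n-1)`. -/
def detCols {n : ℕ} (v : Fin n → EuclideanSpace ℝ (Fin n)) : ℝ :=
  Matrix.det (Matrix.of fun i j => v j i)

/-- The partial derivative `∂_α f (u)` of a map between Euclidean spaces. -/
def pderiv' {m n : ℕ} (f : EuclideanSpace ℝ (Fin m) → EuclideanSpace ℝ (Fin n))
    (u : EuclideanSpace ℝ (Fin m)) (α : Fin m) : EuclideanSpace ℝ (Fin n) :=
  fderiv ℝ f u (EuclideanSpace.single α 1)

/-- detCols in terms of the rows matrix. -/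
lemma detCols_eq_det_rows {n : ℕ} (v : Fin n → EuclideanSpace ℝ (Fin n)) :
    detCols v = Matrix.det (Matrix.of fun i j => v i j) := by
  rw [detCols, ← Matrix.det_transpose (Matrix.of fun i j => v i j)]
  rfl

/-- If all rows lie in the hyperplane orthogonal to a unit vector, det = 0. -/
lemma det_rows_eq_zero {m : ℕ} (Nv : EuclideanSpace ℝ (Fin (m + 1)))
    (hN : ‖Nv‖ = 1) (v : Fin (m + 1) → EuclideanSpace ℝ (Fin (m + 1)))
    (hv : ∀ i, ⟪Nv, v i⟫ = (0 : ℝ)) :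
    Matrix.det (Matrix.of fun i j => v i j) = 0 := by
  haveI : Fact (Module.finrank ℝ (EuclideanSpace ℝ (Fin (m + 1))) = m + 1) :=
    ⟨finrank_euclideanSpace_fin⟩
  have hN0 : Nv ≠ 0 := by intro h; simp [h] at hN
  set W := (ℝ ∙ Nv)ᗮ with hW
  have hmem : ∀ i, v i ∈ W := fun i =>
    (Submodule.mem_orthogonal_singleton_iff_inner_right).2 (hv i)
  have hrank : Module.finrank ℝ W = m := Submodule.finrank_orthogonal_span_singleton hN0
  have hdep : ¬ LinearIndependent ℝ v := by
    intro hind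
    have hind' : LinearIndependent ℝ (fun i => (⟨v i, hmem i⟩ : W)) := by
      apply LinearIndependent.of_comp W.subtype
      exact hind
    have := hind'.fintype_card_le_finrank
    rw [hrank, Fintype.card_fin] at this
    omega
  obtain ⟨g, hsum, k, hk⟩ := Fintype.not_linearIndependent_iff.1 hdep
  rw [← Matrix.exists_vecMul_eq_zero_iff]
  refine ⟨g, fun h => hk (by simp [h]), ?_⟩
  funext j
  have h1 : (∑ x : Fin (m + 1), g x • v x) j = (0 : EuclideanSpace ℝ (Fin (m + 1))) j :=
    congrArg (fun x : EuclideanSpace ℝ (Fin (m + 1)) => x j) hsum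
  have h2 : (∑ x : Fin (m + 1), g x • v x) j = ∑ x : Fin (m + 1), (g x • v x) j :=
    by simp
  rw [h2] at h1
  simpa [Matrix.vecMul, dotProduct] using h1

lemma updateRow_cons {m : ℕ} (a b : EuclideanSpace ℝ (Fin (m + 1)))
    (w : Fin m → EuclideanSpace ℝ (Fin (m + 1))) :
    Matrix.updateRow (Matrix.of fun i j => (Fin.cons a w : Fin (m + 1) → _) i j) 0
        (fun j => b j)
      = Matrix.of fun i j => (Fin.cons b w : Fin (m + 1) → _) i j := by
  ext i j
  refine Fin.cases ?_ (fun i => ?_) i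
  · simp
  · rw [Matrix.updateRow_ne (Fin.succ_ne_zero i)]
    simp

/-- Core linear algebra fact. -/
lemma det_cons_key {m : ℕ} (Nv Xv : EuclideanSpace ℝ (Fin (m + 1)))
    (w : Fin m → EuclideanSpace ℝ (Fin (m + 1)))
    (hN : ‖Nv‖ = 1) (hO : ∀ α, ⟪Nv, w α⟫ = (0 : ℝ)) :
    Matrix.det (Matrix.of fun i j => (Fin.cons Xv w : Fin (m + 1) → _) i j)
      = ⟪Xv, Nv⟫ * Matrix.det (Matrix.of fun i j => (Fin.cons Nv w : Fin (m + 1) → _) i j) := by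
  set P : EuclideanSpace ℝ (Fin (m + 1)) := Xv - ⟪Xv, Nv⟫ • Nv with hP
  have hNN : ⟪Nv, Nv⟫ = (1 : ℝ) := by
    rw [real_inner_self_eq_norm_sq, hN, one_pow]
  have hNP : ⟪Nv, P⟫ = (0 : ℝ) := by
    rw [hP, inner_sub_right, inner_smul_right, hNN, mul_one, real_inner_comm, sub_self]
  have hXv : (fun j => Xv j) = (fun j => (⟪Xv, Nv⟫ • Nv) j) + fun j => P j := by
    funext j; simp [hP]
  have h0 : Matrix.det (Matrix.of fun i j => (Fin.cons P w : Fin (m + 1) → _) i j) = 0 := by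
    apply det_rows_eq_zero Nv hN
    intro i
    refine Fin.cases ?_ (fun i => ?_) i <;> simp [hNP, hO]
  calc Matrix.det (Matrix.of fun i j => (Fin.cons Xv w : Fin (m + 1) → _) i j)
      = Matrix.det (Matrix.updateRow
          (Matrix.of fun i j => (Fin.cons Nv w : Fin (m + 1) → _) i j) 0
          ((fun j => (⟪Xv, Nv⟫ • Nv) j) + fun j => P j)) := by
        rw [← hXv, updateRow_cons]
    _ = ⟪Xv, Nv⟫ * Matrix.det (Matrix.of fun i j => (Fin.cons Nv w : Fin (m + 1) → _) i j) := by
        rw [Matrix.det_updateRow_add]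
        have e1 : (fun j => (⟪Xv, Nv⟫ • Nv) j) = ⟪Xv, Nv⟫ • (fun j => Nv j) := by
          funext j; simp
        rw [e1, Matrix.det_updateRow_smul, updateRow_cons, updateRow_cons, h0, add_zero]

/-- With `n = m + 1`: for `C¹` maps `X : U → ℝⁿ \ {0}` and `N : U → ℝⁿ`
with `‖N‖ = 1` and `⟨N, ∂_α X⟩ = 0` on the open set `U`, setting `N* = X/‖X‖`, one has
`det(N*, ∂₁N*, …, ∂ₘN*) = ‖X‖⁻ⁿ ⟨X,N⟩ det(N, ∂₁X, …, ∂ₘX)` on `U`. -/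
theorem det_normal_copolar {m : ℕ}
    (U : Set (EuclideanSpace ℝ (Fin m))) (hU : IsOpen U)
    (X N : EuclideanSpace ℝ (Fin m) → EuclideanSpace ℝ (Fin (m + 1)))
    (hX : ContDiffOn ℝ 1 X U) (hN : ContDiffOn ℝ 1 N U)
    (hX0 : ∀ u ∈ U, X u ≠ 0)
    (hNnorm : ∀ u ∈ U, ‖N u‖ = 1)
    (hOrth : ∀ u ∈ U, ∀ α : Fin m, ⟪N u, pderiv' X u α⟫ = (0 : ℝ)) :
    ∀ u ∈ U,
      detCols (Fin.cons (‖X u‖⁻¹ • X u)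
          (fun α => pderiv' (fun v => ‖X v‖⁻¹ • X v) u α))
        = (‖X u‖ ^ (m + 1))⁻¹ * ⟪X u, N u⟫ *
            detCols (Fin.cons (N u) (fun α => pderiv' X u α)) := by
  intro u hu
  have hXd : DifferentiableAt ℝ X u :=
    (hX.differentiableOn one_ne_zero).differentiableAt (hU.mem_nhds hu)
  have hXne := hX0 u hu
  have hrne : ‖X u‖ ≠ 0 := norm_ne_zero_iff.2 hXne
  have hnormd : DifferentiableAt ℝ (fun v => ‖X v‖) u := hXd.norm ℝ hXne
  have hg : DifferentiableAt ℝ (fun v => ‖X v‖⁻¹) u := hnormd.inv hrne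
  set g' := fderiv ℝ (fun v => ‖X v‖⁻¹) u with hg'
  have hs : HasFDerivAt (fun v => ‖X v‖⁻¹ • X v)
      (‖X u‖⁻¹ • fderiv ℝ X u + g'.smulRight (X u)) u :=
    hg.hasFDerivAt.smul hXd.hasFDerivAt
  have hp : ∀ α, pderiv' (fun v => ‖X v‖⁻¹ • X v) u α
      = ‖X u‖⁻¹ • pderiv' X u α + g' (EuclideanSpace.single α 1) • X u := by
    intro α
    rw [pderiv', hs.fderiv]
    simp [pderiv']
  set c : Fin m → ℝ := fun α => g' (EuclideanSpace.single α 1) with hc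
  set w : Fin m → EuclideanSpace ℝ (Fin (m + 1)) := fun α => pderiv' X u α with hw
  -- the rows matrices
  set A₀ : Matrix (Fin (m + 1)) (Fin (m + 1)) ℝ :=
    Matrix.of fun i j => (Fin.cons (X u) w : Fin (m + 1) → _) i j with hA₀
  have step1 : detCols (Fin.cons (‖X u‖⁻¹ • X u)
        (fun α => pderiv' (fun v => ‖X v‖⁻¹ • X v) u α))
      = Matrix.det (‖X u‖⁻¹ • A₀) := by
    rw [detCols_eq_det_rows]
    apply Matrix.det_eq_of_forall_row_eq_smul_add_const
      (Fin.cons 0 (fun α => ‖X u‖ * c α) : Fin (m + 1) → ℝ) 0 (by simp)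
    intro i j
    refine Fin.cases ?_ (fun α => ?_) i
    · simp only [Matrix.of_apply, Fin.cons_zero, Matrix.smul_apply, smul_eq_mul,
        zero_mul, add_zero, PiLp.smul_apply]
      simp [hA₀]
    · simp only [Matrix.of_apply, Fin.cons_succ, Matrix.smul_apply, smul_eq_mul,
        PiLp.smul_apply]
      rw [hp α]
      simp only [PiLp.add_apply, PiLp.smul_apply, smul_eq_mul, hw, hc, Fin.cons_zero]
      simp only [hA₀, Matrix.of_apply, Fin.cons_zero, Fin.cons_succ, hw]
      field_simp
  rw [step1, Matrix.det_smul, hA₀, det_cons_key (N u) (X u) w (hNnorm u hu) (hOrth u hu),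
    detCols_eq_det_rows]
  rw [Fintype.card_fin, inv_pow]
  ring
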